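/- arXiv:2102.07347 — 2 statements merged into one kernel-verified Lean document; each statement's English description precedes it below -/
import Mathlib

section
/- (Existence of decaying solution at +∞) Let k > 0 and V, b ∈ L^1(ℝ) ∩ C(ℝ). Then there exists a C² function Y : ℝ → ℝ solving Y'' + b(y)Y' = (k² + V(y))Y on ℝ, with e^{ky}Y(y) → 1 and e^{ky}Y'(y) → −k as y → +∞, and satisfying |Y(y)| ≤ C e^{-ky} for all y ≥ 0, where C depends only on k and ‖V‖_{L^1} + ‖b‖_{L^1}. -/
open MeasureTheory Real Filter Topology
open scoped Nat

namespace Jost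


noncomputable def prim (g : ℝ → ℝ) (y : ℝ) : ℝ := ∫ w in Set.Ioi y, g w

variable {g : ℝ → ℝ}

lemma integrableOn_Ioi (hc : Continuous g) (hi : IntegrableOn g (Set.Ioi 0)) (y : ℝ) :
    IntegrableOn g (Set.Ioi y) := by
  rcases le_or_gt 0 y with h | h
  · exact hi.mono_set (Set.Ioi_subset_Ioi h)
  · rw [← Set.Ioc_union_Ioi_eq_Ioi h.le]
    exact (hc.integrableOn_Ioc).union hi

lemma prim_sub (hc : Continuous g) (hi : IntegrableOn g (Set.Ioi 0)) {a c : ℝ} (hac : a ≤ c) :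
    prim g a - prim g c = ∫ w in a..c, g w := by
  rw [intervalIntegral.integral_of_le hac]
  have h1 : prim g a = (∫ w in Set.Ioc a c, g w) + prim g c := by
    unfold prim
    rw [← setIntegral_union (Set.Ioc_disjoint_Ioi le_rfl) measurableSet_Ioi
      hc.integrableOn_Ioc (integrableOn_Ioi hc hi c), Set.Ioc_union_Ioi_eq_Ioi hac]
  linarith

lemma prim_eq (hc : Continuous g) (hi : IntegrableOn g (Set.Ioi 0)) (y : ℝ) :
    prim g y = prim g 0 - ∫ w in (0:ℝ)..y, g w := by
  rcases le_or_gt 0 y with h | h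
  · have := prim_sub hc hi h; linarith
  · have := prim_sub hc hi h.le
    rw [intervalIntegral.integral_symm] at this
    linarith

lemma prim_hasDerivAt (hc : Continuous g) (hi : IntegrableOn g (Set.Ioi 0)) (y : ℝ) :
    HasDerivAt (prim g) (-(g y)) y := by
  have heq : prim g = fun x => prim g 0 - ∫ w in (0:ℝ)..x, g w := funext (prim_eq hc hi)
  rw [heq]
  have h2 : HasDerivAt (fun x => ∫ w in (0:ℝ)..x, g w) (g y) y :=
    intervalIntegral.integral_hasDerivAt_right (hc.intervalIntegrable 0 y)
      (hc.stronglyMeasurableAtFilter _ _) hc.continuousAt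
  simpa using (hasDerivAt_const y (prim g 0)).fun_sub h2

lemma prim_continuous (hc : Continuous g) (hi : IntegrableOn g (Set.Ioi 0)) :
    Continuous (prim g) :=
  continuous_iff_continuousAt.2 fun y => (prim_hasDerivAt hc hi y).continuousAt

lemma prim_tendsto (hc : Continuous g) (hi : IntegrableOn g (Set.Ioi 0)) :
    Tendsto (prim g) atTop (𝓝 0) := by
  have heq : prim g = fun x => prim g 0 - ∫ w in (0:ℝ)..x, g w := funext (prim_eq hc hi)
  rw [heq]
  have h1 : Tendsto (fun x => ∫ w in (0:ℝ)..x, g w) atTop (𝓝 (prim g 0)) :=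
    intervalIntegral_tendsto_integral_Ioi 0 hi tendsto_id
  have := (tendsto_const_nhds (x := prim g 0) (f := atTop)).sub h1
  simpa using this

lemma abs_prim_le {h : ℝ → ℝ} (y : ℝ) (hgi : IntegrableOn g (Set.Ioi y))
    (hhi : IntegrableOn h (Set.Ioi y)) (hb : ∀ w, y < w → |g w| ≤ h w) :
    |prim g y| ≤ ∫ w in Set.Ioi y, h w := by
  calc |prim g y| ≤ ∫ w in Set.Ioi y, |g w| := by
        simpa [prim, Real.norm_eq_abs] using norm_integral_le_integral_norm (μ := volume.restrict (Set.Ioi y)) g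
    _ ≤ ∫ w in Set.Ioi y, h w := by
        apply setIntegral_mono_on hgi.abs hhi measurableSet_Ioi
        intro w hw; exact hb w hw


lemma prim_nonneg {h : ℝ → ℝ} (hpos : ∀ w, 0 ≤ h w) (y : ℝ) : 0 ≤ prim h y :=
  setIntegral_nonneg measurableSet_Ioi fun w _ => hpos w

lemma prim_le_integral {h : ℝ → ℝ} (hi : Integrable h) (hpos : ∀ w, 0 ≤ h w) (y : ℝ) :
    prim h y ≤ ∫ w, h w :=
  setIntegral_le_integral hi (ae_of_all _ hpos)


lemma integrable_mul_prim_pow {h : ℝ → ℝ} (hc : Continuous h) (hi : Integrable h)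
    (hpos : ∀ w, 0 ≤ h w) (n : ℕ) : Integrable (fun w => h w * (prim h w) ^ n) := by
  have hprimc := prim_continuous hc hi.integrableOn
  have hT : ∀ w, prim h w ≤ ∫ w, h w := prim_le_integral hi hpos
  refine Integrable.mono' (hi.const_mul ((∫ w, h w) ^ n)) ?_ (ae_of_all _ fun w => ?_)
  · exact (hc.mul (hprimc.pow n)).aestronglyMeasurable
  · have h1 : 0 ≤ prim h w := prim_nonneg hpos w
    have h2 : prim h w ^ n ≤ (∫ w, h w) ^ n := pow_le_pow_left₀ h1 (hT w) n
    rw [Real.norm_eq_abs, abs_mul, abs_of_nonneg (hpos w), abs_of_nonneg (pow_nonneg h1 n)]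
    calc h w * prim h w ^ n ≤ h w * (∫ w, h w) ^ n := mul_le_mul_of_nonneg_left h2 (hpos w)
      _ = (∫ w, h w) ^ n * h w := by ring

lemma prim_pow (hc : Continuous h) (hi : Integrable h) (hpos : ∀ w, 0 ≤ h w)
    (n : ℕ) (y : ℝ) :
    ∫ w in Set.Ioi y, h w * (prim h w) ^ n = (prim h y) ^ (n + 1) / ((n : ℝ) + 1) := by
  have hprimc := prim_continuous hc hi.integrableOn
  have hT : ∀ w, prim h w ≤ ∫ w, h w := prim_le_integral hi hpos
  have hint : Integrable (fun w => h w * prim h w ^ n) :=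
    integrable_mul_prim_pow hc hi hpos n
  have key := integral_Ioi_of_hasDerivAt_of_tendsto
      (f := fun w => -(prim h w ^ (n + 1) / ((n : ℝ) + 1)))
      (f' := fun w => h w * prim h w ^ n) (a := y) (m := 0) ?_ ?_ hint.integrableOn ?_
  · rw [key]; ring
  · exact (((hprimc.pow (n+1)).div_const _).neg).continuousWithinAt
  · intro x _
    have hd := ((((prim_hasDerivAt hc hi.integrableOn x).fun_pow (n + 1)).div_const
        ((n : ℝ) + 1)).fun_neg)
    convert hd using 1
    have hne : (n : ℝ) + 1 ≠ 0 := by positivity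
    rw [Nat.add_sub_cancel]; push_cast
    field_simp
  · have h0 := prim_tendsto hc hi.integrableOn
    have := (((h0.pow (n + 1)).div_const ((n : ℝ) + 1)).neg)
    simpa using this


noncomputable def seq (k : ℝ) (V b : ℝ → ℝ) : ℕ → (ℝ → ℝ) × (ℝ → ℝ)
  | 0 => (fun _ => 1, fun _ => -k)
  | n + 1 =>
      ((fun y => (2 * k)⁻¹ *
          (prim (fun w => V w * (seq k V b n).1 w - b w * (seq k V b n).2 w) y -
            Real.exp (2 * k * y) *
              prim (fun w => Real.exp (-(2 * k * w)) *
                (V w * (seq k V b n).1 w - b w * (seq k V b n).2 w)) y)),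
       (fun y => -(2⁻¹ *
          (prim (fun w => V w * (seq k V b n).1 w - b w * (seq k V b n).2 w) y +
            Real.exp (2 * k * y) *
              prim (fun w => Real.exp (-(2 * k * w)) *
                (V w * (seq k V b n).1 w - b w * (seq k V b n).2 w)) y))))

variable {k : ℝ} {V b : ℝ → ℝ}

/-- the driving term of step `n` -/
noncomputable def fn (k : ℝ) (V b : ℝ → ℝ) (n : ℕ) : ℝ → ℝ :=
  fun w => V w * (seq k V b n).1 w - b w * (seq k V b n).2 w

noncomputable def gn (k : ℝ) (V b : ℝ → ℝ) (n : ℕ) : ℝ → ℝ :=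
  fun w => Real.exp (-(2 * k * w)) * fn k V b n w

lemma seq_succ_fst (n : ℕ) : (seq k V b (n+1)).1 =
    fun y => (2 * k)⁻¹ * (prim (fn k V b n) y -
      Real.exp (2 * k * y) * prim (gn k V b n) y) := by
  rfl

lemma seq_succ_snd (n : ℕ) : (seq k V b (n+1)).2 =
    fun y => -(2⁻¹ * (prim (fn k V b n) y +
      Real.exp (2 * k * y) * prim (gn k V b n) y)) := by
  rfl

theorem seq_prop (hk : 0 < k) (hVc : Continuous V) (hbc : Continuous b)
    (hVi : Integrable V) (hbi : Integrable b) (n : ℕ) :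
    Continuous (seq k V b n).1 ∧ Continuous (seq k V b n).2 ∧
    ∀ y, |(seq k V b n).1 y| ≤
        max 1 k * (max 1 k⁻¹) ^ n * (prim (fun w => |V w| + |b w|) y) ^ n / (n ! : ℝ) ∧
      |(seq k V b n).2 y| ≤
        max 1 k * (max 1 k⁻¹) ^ n * (prim (fun w => |V w| + |b w|) y) ^ n / (n ! : ℝ) := by
  set hh : ℝ → ℝ := fun w => |V w| + |b w| with hhdef
  have hhc : Continuous hh := hVc.abs.add hbc.abs
  have hhi : Integrable hh := hVi.abs.add hbi.abs
  have hhpos : ∀ w, 0 ≤ hh w := fun w => add_nonneg (abs_nonneg _) (abs_nonneg _)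
  set N₀ := max 1 k with hN₀
  set B := max 1 k⁻¹ with hB
  have hN₀1 : (1:ℝ) ≤ N₀ := le_max_left _ _
  have hB1 : (1:ℝ) ≤ B := le_max_left _ _
  have hBk : k⁻¹ ≤ B := le_max_right _ _
  set H := prim hh with hHdef
  have hH0 : ∀ y, 0 ≤ H y := prim_nonneg hhpos
  have hHT : ∀ y, H y ≤ ∫ w, hh w := prim_le_integral hhi hhpos
  have hT0 : 0 ≤ ∫ w, hh w := le_trans (hH0 0) (hHT 0)
  induction n with
  | zero =>
      refine ⟨continuous_const, continuous_const, fun y => ⟨?_, ?_⟩⟩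
      · simpa [seq] using hN₀1
      · simp only [seq, pow_zero, Nat.factorial_zero, Nat.cast_one, mul_one, div_one]
        rw [abs_neg, abs_of_pos hk]
        exact le_max_right 1 k
  | succ n ih =>
      obtain ⟨hac, hcc, hbd⟩ := ih
      have hfc : Continuous (fn k V b n) := by
        unfold fn; exact (hVc.mul hac).sub (hbc.mul hcc)
      -- pointwise bound on fn
      have hfb : ∀ w, |fn k V b n w| ≤ hh w * (N₀ * B ^ n * H w ^ n / (n ! : ℝ)) := by
        intro w
        have h1 := (hbd w).1
        have h2 := (hbd w).2
        have e1 : |fn k V b n w| ≤ |V w| * |(seq k V b n).1 w| + |b w| * |(seq k V b n).2 w| := by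
          unfold fn
          calc |V w * (seq k V b n).1 w - b w * (seq k V b n).2 w|
              ≤ |V w * (seq k V b n).1 w| + |b w * (seq k V b n).2 w| := abs_sub _ _
            _ = |V w| * |(seq k V b n).1 w| + |b w| * |(seq k V b n).2 w| := by
                rw [abs_mul, abs_mul]
        have hVpos := abs_nonneg (V w)
        have hbpos := abs_nonneg (b w)
        calc |fn k V b n w| ≤ |V w| * |(seq k V b n).1 w| + |b w| * |(seq k V b n).2 w| := e1
          _ ≤ |V w| * (N₀ * B ^ n * H w ^ n / (n ! : ℝ)) + |b w| * (N₀ * B ^ n * H w ^ n / (n ! : ℝ)) := by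
              gcongr
          _ = hh w * (N₀ * B ^ n * H w ^ n / (n ! : ℝ)) := by rw [hhdef]; ring
      -- global constant bound for integrability
      have hDn : ∀ w, hh w * (N₀ * B ^ n * H w ^ n / (n ! : ℝ)) ≤
          hh w * (N₀ * B ^ n * (∫ w, hh w) ^ n / (n ! : ℝ)) := by
        intro w
        have hfacpos : (0:ℝ) < (n ! : ℝ) := by exact_mod_cast Nat.factorial_pos n
        have hp : H w ^ n ≤ (∫ w, hh w) ^ n := pow_le_pow_left₀ (hH0 w) (hHT w) n
        exact mul_le_mul_of_nonneg_left ((div_le_div_iff_of_pos_right hfacpos).2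
          (mul_le_mul_of_nonneg_left hp (by positivity))) (hhpos w)
      have hfi : Integrable (fn k V b n) := by
        refine Integrable.mono' (hhi.const_mul (N₀ * B ^ n * (∫ w, hh w) ^ n / (n ! : ℝ)))
          hfc.aestronglyMeasurable (ae_of_all _ fun w => ?_)
        rw [Real.norm_eq_abs]
        calc |fn k V b n w| ≤ hh w * (N₀ * B ^ n * H w ^ n / (n ! : ℝ)) := hfb w
          _ ≤ hh w * (N₀ * B ^ n * (∫ w, hh w) ^ n / (n ! : ℝ)) := hDn w
          _ = N₀ * B ^ n * (∫ w, hh w) ^ n / (n ! : ℝ) * hh w := by ring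
      have hgc : Continuous (gn k V b n) := by
        unfold gn
        exact (Real.continuous_exp.comp (by continuity)).mul hfc
      have hgi : IntegrableOn (gn k V b n) (Set.Ioi 0) := by
        refine Integrable.mono' ((hhi.const_mul (N₀ * B ^ n * (∫ w, hh w) ^ n / (n ! : ℝ))).integrableOn)
          hgc.aestronglyMeasurable ?_
        refine (ae_restrict_iff' measurableSet_Ioi).2 (ae_of_all _ fun w hw => ?_)
        rw [Real.norm_eq_abs]
        unfold gn
        rw [abs_mul, abs_of_pos (Real.exp_pos _)]
        have he1 : Real.exp (-(2 * k * w)) ≤ 1 := by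
          rw [Real.exp_le_one_iff]
          have : 0 < w := hw
          nlinarith
        calc Real.exp (-(2 * k * w)) * |fn k V b n w| ≤ 1 * |fn k V b n w| :=
              mul_le_mul_of_nonneg_right he1 (abs_nonneg _)
          _ = |fn k V b n w| := one_mul _
          _ ≤ hh w * (N₀ * B ^ n * H w ^ n / (n ! : ℝ)) := hfb w
          _ ≤ hh w * (N₀ * B ^ n * (∫ w, hh w) ^ n / (n ! : ℝ)) := hDn w
          _ = N₀ * B ^ n * (∫ w, hh w) ^ n / (n ! : ℝ) * hh w := by ring
      -- bound on prim fn
      have hhHi : Integrable (fun w => hh w * H w ^ n) :=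
        integrable_mul_prim_pow hhc hhi hhpos n
      have hEb : ∀ y, |prim (fn k V b n) y| ≤
          N₀ * B ^ n / (n ! : ℝ) * (H y ^ (n+1) / ((n:ℝ) + 1)) := by
        intro y
        have h1 : |prim (fn k V b n) y| ≤
            ∫ w in Set.Ioi y, (N₀ * B ^ n / (n ! : ℝ)) * (hh w * H w ^ n) := by
          refine abs_prim_le y hfi.integrableOn ((hhHi.const_mul _).integrableOn) fun w _ => ?_
          calc |fn k V b n w| ≤ hh w * (N₀ * B ^ n * H w ^ n / (n ! : ℝ)) := hfb w
            _ = N₀ * B ^ n / (n ! : ℝ) * (hh w * H w ^ n) := by ring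
        rw [integral_const_mul, prim_pow hhc hhi hhpos n y] at h1
        exact h1
      have hGb : ∀ y, Real.exp (2 * k * y) * |prim (gn k V b n) y| ≤
          N₀ * B ^ n / (n ! : ℝ) * (H y ^ (n+1) / ((n:ℝ) + 1)) := by
        intro y
        have hgiy : IntegrableOn (gn k V b n) (Set.Ioi y) := by
          refine Integrable.mono' ((hhi.const_mul
              (Real.exp (-(2*k*y)) * (N₀ * B ^ n * (∫ w, hh w) ^ n / (n ! : ℝ)))).integrableOn)
            hgc.aestronglyMeasurable ?_
          refine (ae_restrict_iff' measurableSet_Ioi).2 (ae_of_all _ fun w hw => ?_)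
          rw [Real.norm_eq_abs]
          unfold gn
          rw [abs_mul, abs_of_pos (Real.exp_pos _)]
          have hw' : y < w := hw
          have he1 : Real.exp (-(2 * k * w)) ≤ Real.exp (-(2 * k * y)) := by
            apply Real.exp_le_exp.2; nlinarith
          calc Real.exp (-(2 * k * w)) * |fn k V b n w|
              ≤ Real.exp (-(2 * k * y)) * (hh w * (N₀ * B ^ n * (∫ w, hh w) ^ n / (n ! : ℝ))) := by
                exact mul_le_mul he1 (le_trans (hfb w) (hDn w)) (abs_nonneg _) (Real.exp_pos _).le
            _ = Real.exp (-(2*k*y)) * (N₀ * B ^ n * (∫ w, hh w) ^ n / (n ! : ℝ)) * hh w := by ring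
        have h1 : |prim (gn k V b n) y| ≤
            ∫ w in Set.Ioi y, Real.exp (-(2*k*y)) * ((N₀ * B ^ n / (n ! : ℝ)) * (hh w * H w ^ n)) := by
          refine abs_prim_le y hgiy (((hhHi.const_mul _).const_mul _).integrableOn) fun w hw => ?_
          unfold gn
          rw [abs_mul, abs_of_pos (Real.exp_pos _)]
          have he1 : Real.exp (-(2 * k * w)) ≤ Real.exp (-(2 * k * y)) := by
            apply Real.exp_le_exp.2; nlinarith
          have := hfb w
          calc Real.exp (-(2 * k * w)) * |fn k V b n w|
              ≤ Real.exp (-(2 * k * y)) * (hh w * (N₀ * B ^ n * H w ^ n / (n ! : ℝ))) :=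
                mul_le_mul he1 (hfb w) (abs_nonneg _) (Real.exp_pos _).le
            _ = Real.exp (-(2*k*y)) * ((N₀ * B ^ n / (n ! : ℝ)) * (hh w * H w ^ n)) := by ring
        rw [integral_const_mul, integral_const_mul, prim_pow hhc hhi hhpos n y] at h1
        calc Real.exp (2 * k * y) * |prim (gn k V b n) y|
            ≤ Real.exp (2 * k * y) * (Real.exp (-(2*k*y)) *
              ((N₀ * B ^ n / (n ! : ℝ)) * (H y ^ (n+1) / ((n:ℝ)+1)))) :=
              mul_le_mul_of_nonneg_left h1 (Real.exp_pos _).le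
          _ = (Real.exp (2 * k * y) * Real.exp (-(2*k*y))) *
              ((N₀ * B ^ n / (n ! : ℝ)) * (H y ^ (n+1) / ((n:ℝ)+1))) := by ring
          _ = N₀ * B ^ n / (n ! : ℝ) * (H y ^ (n+1) / ((n:ℝ)+1)) := by
              rw [← Real.exp_add]; simp
      -- continuity of new components
      have hPc : Continuous (prim (fn k V b n)) := prim_continuous hfc hfi.integrableOn
      have hQc : Continuous (prim (gn k V b n)) := prim_continuous hgc hgi
      have hEc : Continuous (fun y => Real.exp (2 * k * y)) :=
        Real.continuous_exp.comp (by continuity)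
      refine ⟨?_, ?_, fun y => ?_⟩
      · rw [seq_succ_fst]; exact continuous_const.mul (hPc.sub (hEc.mul hQc))
      · rw [seq_succ_snd]; exact (continuous_const.mul (hPc.add (hEc.mul hQc))).neg
      · have hE := hEb y
        have hG := hGb y
        have hfact : ((n+1)! : ℝ) = ((n:ℝ)+1) * n ! := by
          rw [Nat.factorial_succ]; push_cast; ring
        have key : |prim (fn k V b n) y| + Real.exp (2*k*y) * |prim (gn k V b n) y| ≤
            2 * (N₀ * B ^ n / (n ! : ℝ) * (H y ^ (n+1) / ((n:ℝ)+1))) := by linarith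
        have hEpos : (0:ℝ) ≤ N₀ * B ^ n / (n ! : ℝ) * (H y ^ (n+1) / ((n:ℝ)+1)) := by
          have := hH0 y
          positivity
        constructor
        · rw [seq_succ_fst]
          have habs : |(2 * k)⁻¹ * (prim (fn k V b n) y -
              Real.exp (2 * k * y) * prim (gn k V b n) y)| ≤
              (2*k)⁻¹ * (|prim (fn k V b n) y| + Real.exp (2*k*y) * |prim (gn k V b n) y|) := by
            rw [abs_mul, abs_of_pos (by positivity : (0:ℝ) < (2*k)⁻¹)]
            gcongr
            calc |prim (fn k V b n) y - Real.exp (2 * k * y) * prim (gn k V b n) y|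
                ≤ |prim (fn k V b n) y| + |Real.exp (2 * k * y) * prim (gn k V b n) y| :=
                  abs_sub _ _
              _ = |prim (fn k V b n) y| + Real.exp (2*k*y) * |prim (gn k V b n) y| := by
                  rw [abs_mul, abs_of_pos (Real.exp_pos _)]
          have hfacpos : (0:ℝ) < (n ! : ℝ) := by
            exact_mod_cast Nat.factorial_pos n
          calc |(2 * k)⁻¹ * (prim (fn k V b n) y -
              Real.exp (2 * k * y) * prim (gn k V b n) y)|
              ≤ (2*k)⁻¹ * (|prim (fn k V b n) y| +
                Real.exp (2*k*y) * |prim (gn k V b n) y|) := habs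
            _ ≤ (2*k)⁻¹ * (2 * (N₀ * B ^ n / (n ! : ℝ) * (H y ^ (n+1) / ((n:ℝ)+1)))) := by
                exact mul_le_mul_of_nonneg_left key (by positivity)
            _ = k⁻¹ * (N₀ * B ^ n / (n ! : ℝ) * (H y ^ (n+1) / ((n:ℝ)+1))) := by
                rw [mul_inv]; ring
            _ ≤ B * (N₀ * B ^ n / (n ! : ℝ) * (H y ^ (n+1) / ((n:ℝ)+1))) :=
                mul_le_mul_of_nonneg_right hBk hEpos
            _ = N₀ * B ^ (n+1) * H y ^ (n+1) / ((n+1)! : ℝ) := by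
                rw [hfact, ← div_div]; ring
        · rw [seq_succ_snd]
          have hfacpos : (0:ℝ) < (n ! : ℝ) := by
            exact_mod_cast Nat.factorial_pos n
          have habs : |(-(2⁻¹ * (prim (fn k V b n) y +
              Real.exp (2 * k * y) * prim (gn k V b n) y)))| ≤
              2⁻¹ * (|prim (fn k V b n) y| + Real.exp (2*k*y) * |prim (gn k V b n) y|) := by
            rw [abs_neg, abs_mul, abs_of_pos (by norm_num : (0:ℝ) < (2:ℝ)⁻¹)]
            gcongr
            calc |prim (fn k V b n) y + Real.exp (2 * k * y) * prim (gn k V b n) y|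
                ≤ |prim (fn k V b n) y| + |Real.exp (2 * k * y) * prim (gn k V b n) y| :=
                  abs_add_le _ _
              _ = |prim (fn k V b n) y| + Real.exp (2*k*y) * |prim (gn k V b n) y| := by
                  rw [abs_mul, abs_of_pos (Real.exp_pos _)]
          calc |(-(2⁻¹ * (prim (fn k V b n) y +
              Real.exp (2 * k * y) * prim (gn k V b n) y)))|
              ≤ 2⁻¹ * (|prim (fn k V b n) y| +
                Real.exp (2*k*y) * |prim (gn k V b n) y|) := habs
            _ ≤ 2⁻¹ * (2 * (N₀ * B ^ n / (n ! : ℝ) * (H y ^ (n+1) / ((n:ℝ)+1)))) := by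
                exact mul_le_mul_of_nonneg_left key (by norm_num)
            _ = N₀ * B ^ n / (n ! : ℝ) * (H y ^ (n+1) / ((n:ℝ)+1)) := by ring
            _ ≤ B * (N₀ * B ^ n / (n ! : ℝ) * (H y ^ (n+1) / ((n:ℝ)+1))) :=
                le_mul_of_one_le_left hEpos hB1
            _ = N₀ * B ^ (n+1) * H y ^ (n+1) / ((n+1)! : ℝ) := by
                rw [hfact, ← div_div]; ring


end Jost

open Jost


/-- Jost solution at `+∞`: for `k > 0` and continuous integrable
`V, b`, there is a C² solution of `Y'' + b Y' = (k² + V) Y` with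
`e^{ky} Y → 1`, `e^{ky} Y' → −k` at `+∞`, and `|Y(y)| ≤ C e^{-ky}` on `[0,∞)`
for `C` depending only on `k` and `‖V‖_{L¹} + ‖b‖_{L¹}`. -/
theorem stmt12 (k A : ℝ) (hk : 0 < k) :
    ∃ C > 0, ∀ V b : ℝ → ℝ, Continuous V → Continuous b →
      Integrable V → Integrable b →
      (∫ y : ℝ, |V y|) + (∫ y : ℝ, |b y|) ≤ A →
      ∃ Y : ℝ → ℝ, ContDiff ℝ 2 Y ∧
        (∀ y, deriv (deriv Y) y + b y * deriv Y y = (k ^ 2 + V y) * Y y) ∧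
        Tendsto (fun y => exp (k * y) * Y y) atTop (nhds 1) ∧
        Tendsto (fun y => exp (k * y) * deriv Y y) atTop (nhds (-k)) ∧
        ∀ y : ℝ, 0 ≤ y → |Y y| ≤ C * exp (-k * y) := by
  have hk' : k ≠ 0 := ne_of_gt hk
  set N₀ : ℝ := max 1 k with hN₀def
  set B : ℝ := max 1 k⁻¹ with hBdef
  set A₀ : ℝ := max A 0 with hA₀def
  have hN₀1 : (1:ℝ) ≤ N₀ := le_max_left _ _
  have hB1 : (1:ℝ) ≤ B := le_max_left _ _
  have hA₀0 : (0:ℝ) ≤ A₀ := le_max_right _ _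
  have hN₀0 : (0:ℝ) ≤ N₀ := le_trans zero_le_one hN₀1
  have hB0 : (0:ℝ) ≤ B := le_trans zero_le_one hB1
  refine ⟨N₀ * Real.exp (B * A₀), by positivity, ?_⟩
  set C : ℝ := N₀ * Real.exp (B * A₀) with hCdef
  intro V b hVc hbc hVi hbi hA
  set hh : ℝ → ℝ := fun w => |V w| + |b w| with hhdef
  have hhc : Continuous hh := hVc.abs.add hbc.abs
  have hhi : Integrable hh := hVi.abs.add hbi.abs
  have hhpos : ∀ w, 0 ≤ hh w := fun w => add_nonneg (abs_nonneg _) (abs_nonneg _)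
  have hT : ∫ w, hh w ≤ A₀ := by
    have h1 : ∫ w, hh w = (∫ y, |V y|) + ∫ y, |b y| := integral_add hVi.abs hbi.abs
    rw [h1]; exact le_trans hA (le_max_left _ _)
  have hH0 : ∀ y, 0 ≤ prim hh y := prim_nonneg hhpos
  have hHA : ∀ y, prim hh y ≤ A₀ := fun y => le_trans (prim_le_integral hhi hhpos y) hT
  have hHIoi : ∀ y, (∫ w in Set.Ioi y, hh w) ≤ A₀ := hHA
  have hsp := seq_prop hk hVc hbc hVi hbi
  have hac : ∀ n, Continuous (seq k V b n).1 := fun n => (hsp n).1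
  have hcc : ∀ n, Continuous (seq k V b n).2 := fun n => (hsp n).2.1
  set M : ℕ → ℝ := fun n => N₀ * (B * A₀) ^ n / (n ! : ℝ) with hMdef
  have hM0 : ∀ n, 0 ≤ M n := fun n => by positivity
  have hMa : ∀ n y, |(seq k V b n).1 y| ≤ M n := by
    intro n y
    refine le_trans ((hsp n).2.2 y).1 ?_
    simp only [hMdef, mul_pow, ← mul_assoc]
    gcongr
    exacts [hH0 y, hHA y]
  have hMc : ∀ n y, |(seq k V b n).2 y| ≤ M n := by
    intro n y
    refine le_trans ((hsp n).2.2 y).2 ?_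
    simp only [hMdef, mul_pow, ← mul_assoc]
    gcongr
    exacts [hH0 y, hHA y]
  have hMsum : Summable M := by
    have h1 := (Real.summable_pow_div_factorial (B * A₀)).mul_left N₀
    simpa [hMdef, mul_div_assoc] using h1
  have htsumM : ∑' n, M n ≤ C := by
    calc ∑' n, M n = N₀ * ∑' n, (B * A₀) ^ n / (n ! : ℝ) := by
          rw [← tsum_mul_left]
          exact tsum_congr fun n => by simp only [hMdef]; rw [mul_div_assoc]
      _ ≤ N₀ * Real.exp (B * A₀) := by
          gcongr
          exact Real.tsum_le_of_sum_range_le (fun n => by positivity)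
            (fun n => Real.sum_le_exp_of_nonneg (by positivity) n)
  have hS1 : ∀ y, Summable fun n => (seq k V b n).1 y := fun y =>
    Summable.of_norm_bounded hMsum fun n => by
      rw [Real.norm_eq_abs]; exact hMa n y
  have hS2 : ∀ y, Summable fun n => (seq k V b n).2 y := fun y =>
    Summable.of_norm_bounded hMsum fun n => by
      rw [Real.norm_eq_abs]; exact hMc n y
  set u₁ : ℝ → ℝ := fun y => ∑' n, (seq k V b n).1 y with hu₁def
  set u₂ : ℝ → ℝ := fun y => ∑' n, (seq k V b n).2 y with hu₂def
  have hu₁c : Continuous u₁ := continuous_tsum hac hMsum fun n y => by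
    rw [Real.norm_eq_abs]; exact hMa n y
  have hu₂c : Continuous u₂ := continuous_tsum hcc hMsum fun n y => by
    rw [Real.norm_eq_abs]; exact hMc n y
  have hu₁b : ∀ y, |u₁ y| ≤ C := by
    intro y
    have habs : Summable fun n => ‖(seq k V b n).1 y‖ := by
      simpa only [Real.norm_eq_abs] using (hS1 y).abs
    have h0 : ‖u₁ y‖ ≤ ∑' n, ‖(seq k V b n).1 y‖ := norm_tsum_le_tsum_norm habs
    calc |u₁ y| = ‖u₁ y‖ := (Real.norm_eq_abs _).symm
      _ ≤ ∑' n, ‖(seq k V b n).1 y‖ := h0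
      _ = ∑' n, |(seq k V b n).1 y| := by simp only [Real.norm_eq_abs]
      _ ≤ ∑' n, M n := Summable.tsum_le_tsum (fun n => hMa n y) (hS1 y).abs hMsum
      _ ≤ C := htsumM
  have hu₂b : ∀ y, |u₂ y| ≤ C := by
    intro y
    have habs : Summable fun n => ‖(seq k V b n).2 y‖ := by
      simpa only [Real.norm_eq_abs] using (hS2 y).abs
    have h0 : ‖u₂ y‖ ≤ ∑' n, ‖(seq k V b n).2 y‖ := norm_tsum_le_tsum_norm habs
    calc |u₂ y| = ‖u₂ y‖ := (Real.norm_eq_abs _).symm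
      _ ≤ ∑' n, ‖(seq k V b n).2 y‖ := h0
      _ = ∑' n, |(seq k V b n).2 y| := by simp only [Real.norm_eq_abs]
      _ ≤ ∑' n, M n := Summable.tsum_le_tsum (fun n => hMc n y) (hS2 y).abs hMsum
      _ ≤ C := htsumM
  -- the limiting driving term
  set F : ℝ → ℝ := fun w => V w * u₁ w - b w * u₂ w with hFdef
  have hFc : Continuous F := (hVc.mul hu₁c).sub (hbc.mul hu₂c)
  have hFb : ∀ w, |F w| ≤ C * hh w := by
    intro w
    calc |F w| ≤ |V w * u₁ w| + |b w * u₂ w| := abs_sub _ _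
      _ = |V w| * |u₁ w| + |b w| * |u₂ w| := by rw [abs_mul, abs_mul]
      _ ≤ |V w| * C + |b w| * C := by
          gcongr
          exacts [hu₁b w, hu₂b w]
      _ = C * hh w := by simp only [hhdef]; ring
  have hFi : Integrable F := Integrable.mono' (hhi.const_mul C) hFc.aestronglyMeasurable
    (ae_of_all _ fun w => by rw [Real.norm_eq_abs]; exact hFb w)
  set G : ℝ → ℝ := fun w => Real.exp (-(2 * k * w)) * F w with hGdef
  have hGc : Continuous G := (Real.continuous_exp.comp ((continuous_const.mul continuous_id).neg)).mul hFc
  have hGiy : ∀ y, IntegrableOn G (Set.Ioi y) := by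
    intro y
    refine Integrable.mono' ((hhi.const_mul (Real.exp (-(2 * k * y)) * C)).integrableOn)
      hGc.aestronglyMeasurable ((ae_restrict_iff' measurableSet_Ioi).2 (ae_of_all _ fun w hw => ?_))
    have hw' : y < w := hw
    rw [Real.norm_eq_abs, hGdef]
    simp only
    rw [abs_mul, abs_of_pos (Real.exp_pos _)]
    have he1 : Real.exp (-(2 * k * w)) ≤ Real.exp (-(2 * k * y)) :=
      Real.exp_le_exp.2 (by nlinarith)
    calc Real.exp (-(2 * k * w)) * |F w| ≤ Real.exp (-(2 * k * y)) * (C * hh w) :=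
          mul_le_mul he1 (hFb w) (abs_nonneg _) (Real.exp_pos _).le
      _ = Real.exp (-(2 * k * y)) * C * hh w := by ring
  -- per-term facts
  have hfnb : ∀ n w, |fn k V b n w| ≤ M n * hh w := by
    intro n w
    calc |fn k V b n w| ≤ |V w * (seq k V b n).1 w| + |b w * (seq k V b n).2 w| := abs_sub _ _
      _ = |V w| * |(seq k V b n).1 w| + |b w| * |(seq k V b n).2 w| := by rw [abs_mul, abs_mul]
      _ ≤ |V w| * M n + |b w| * M n := by
          gcongr
          exacts [hMa n w, hMc n w]
      _ = M n * hh w := by simp only [hhdef]; ring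
  have hfnc : ∀ n, Continuous (fn k V b n) := fun n => (hVc.mul (hac n)).sub (hbc.mul (hcc n))
  have hfni : ∀ n, Integrable (fn k V b n) := fun n =>
    Integrable.mono' (hhi.const_mul (M n)) (hfnc n).aestronglyMeasurable
      (ae_of_all _ fun w => by rw [Real.norm_eq_abs]; exact hfnb n w)
  have hgnc : ∀ n, Continuous (gn k V b n) :=
    fun n => (Real.continuous_exp.comp ((continuous_const.mul continuous_id).neg)).mul (hfnc n)
  have hgnb : ∀ n y w, y < w → |gn k V b n w| ≤ Real.exp (-(2 * k * y)) * (M n * hh w) := by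
    intro n y w hw
    have he1 : Real.exp (-(2 * k * w)) ≤ Real.exp (-(2 * k * y)) :=
      Real.exp_le_exp.2 (by nlinarith)
    calc |gn k V b n w| = Real.exp (-(2 * k * w)) * |fn k V b n w| := by
          rw [show gn k V b n w = Real.exp (-(2 * k * w)) * fn k V b n w from rfl,
            abs_mul, abs_of_pos (Real.exp_pos _)]
      _ ≤ Real.exp (-(2 * k * y)) * (M n * hh w) :=
          mul_le_mul he1 (hfnb n w) (abs_nonneg _) (Real.exp_pos _).le
  have hgniy : ∀ n y, IntegrableOn (gn k V b n) (Set.Ioi y) := by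
    intro n y
    refine Integrable.mono' ((hhi.const_mul (Real.exp (-(2 * k * y)) * M n)).integrableOn)
      (hgnc n).aestronglyMeasurable ((ae_restrict_iff' measurableSet_Ioi).2
        (ae_of_all _ fun w hw => ?_))
    rw [Real.norm_eq_abs]
    calc |gn k V b n w| ≤ Real.exp (-(2 * k * y)) * (M n * hh w) := hgnb n y w hw
      _ = Real.exp (-(2 * k * y)) * M n * hh w := by ring
  have hprimfnb : ∀ n y, |prim (fn k V b n) y| ≤ M n * A₀ := by
    intro n y
    have h1 : |prim (fn k V b n) y| ≤ ∫ w in Set.Ioi y, M n * hh w :=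
      abs_prim_le y (hfni n).integrableOn ((hhi.const_mul _).integrableOn) fun w _ => hfnb n w
    rw [integral_const_mul] at h1
    exact le_trans h1 (mul_le_mul_of_nonneg_left (hHIoi y) (hM0 n))
  have hprimgnb : ∀ n y, |prim (gn k V b n) y| ≤ Real.exp (-(2 * k * y)) * (M n * A₀) := by
    intro n y
    have h1 : |prim (gn k V b n) y| ≤
        ∫ w in Set.Ioi y, Real.exp (-(2 * k * y)) * (M n * hh w) :=
      abs_prim_le y (hgniy n y) (((hhi.const_mul _).const_mul _).integrableOn)
        fun w hw => hgnb n y w hw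
    rw [integral_const_mul, integral_const_mul] at h1
    refine le_trans h1 ?_
    have : M n * ∫ w in Set.Ioi y, hh w ≤ M n * A₀ :=
      mul_le_mul_of_nonneg_left (hHIoi y) (hM0 n)
    exact mul_le_mul_of_nonneg_left this (Real.exp_pos _).le
  have hSF : ∀ y, Summable fun n => prim (fn k V b n) y := fun y =>
    Summable.of_norm_bounded (hMsum.mul_right A₀) fun n => by
      rw [Real.norm_eq_abs]; exact hprimfnb n y
  have hSG : ∀ y, Summable fun n => prim (gn k V b n) y := fun y =>
    Summable.of_norm_bounded ((hMsum.mul_right A₀).mul_left (Real.exp (-(2 * k * y))))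
      fun n => by rw [Real.norm_eq_abs]; exact hprimgnb n y
  -- pointwise sums of the driving terms
  have hptF : ∀ w, ∑' n, fn k V b n w = F w := by
    intro w
    calc ∑' n, fn k V b n w
        = (∑' n, V w * (seq k V b n).1 w) - ∑' n, b w * (seq k V b n).2 w :=
          Summable.tsum_sub ((hS1 w).mul_left _) ((hS2 w).mul_left _)
      _ = F w := by rw [tsum_mul_left, tsum_mul_left]
  have hptG : ∀ w, ∑' n, gn k V b n w = G w := by
    intro w
    calc ∑' n, gn k V b n w = Real.exp (-(2 * k * w)) * ∑' n, fn k V b n w := tsum_mul_left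
      _ = G w := by rw [hptF w]
  -- swapping sum and integral
  have hswapF : ∀ y, ∑' n, prim (fn k V b n) y = prim F y := by
    intro y
    have hnorm : Summable fun n => ∫ w in Set.Ioi y, ‖fn k V b n w‖ := by
      refine Summable.of_nonneg_of_le (fun n => integral_nonneg fun w => norm_nonneg _)
        (fun n => ?_) (hMsum.mul_right A₀)
      calc ∫ w in Set.Ioi y, ‖fn k V b n w‖ ≤ ∫ w in Set.Ioi y, M n * hh w := by
            refine setIntegral_mono_on (hfni n).norm.integrableOn
              ((hhi.const_mul _).integrableOn) measurableSet_Ioi fun w _ => ?_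
            rw [Real.norm_eq_abs]; exact hfnb n w
        _ = M n * ∫ w in Set.Ioi y, hh w := integral_const_mul _ _
        _ ≤ M n * A₀ := mul_le_mul_of_nonneg_left (hHIoi y) (hM0 n)
    have h2 := integral_tsum_of_summable_integral_norm
      (fun n => (hfni n).integrableOn) hnorm
    calc ∑' n, prim (fn k V b n) y = ∫ w in Set.Ioi y, ∑' n, fn k V b n w := h2
      _ = prim F y := integral_congr_ae (ae_of_all _ fun w => hptF w)
  have hswapG : ∀ y, ∑' n, prim (gn k V b n) y = prim G y := by
    intro y
    have hnorm : Summable fun n => ∫ w in Set.Ioi y, ‖gn k V b n w‖ := by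
      refine Summable.of_nonneg_of_le (fun n => integral_nonneg fun w => norm_nonneg _)
        (fun n => ?_) ((hMsum.mul_right A₀).mul_left (Real.exp (-(2 * k * y))))
      calc ∫ w in Set.Ioi y, ‖gn k V b n w‖
          ≤ ∫ w in Set.Ioi y, Real.exp (-(2 * k * y)) * (M n * hh w) := by
            refine setIntegral_mono_on (hgniy n y).norm
              (((hhi.const_mul _).const_mul _).integrableOn) measurableSet_Ioi fun w hw => ?_
            rw [Real.norm_eq_abs]; exact hgnb n y w hw
        _ = Real.exp (-(2 * k * y)) * (M n * ∫ w in Set.Ioi y, hh w) := by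
            rw [integral_const_mul, integral_const_mul]
        _ ≤ Real.exp (-(2 * k * y)) * (M n * A₀) := by
            exact mul_le_mul_of_nonneg_left
              (mul_le_mul_of_nonneg_left (hHIoi y) (hM0 n)) (Real.exp_pos _).le
    have h2 := integral_tsum_of_summable_integral_norm (fun n => hgniy n y) hnorm
    calc ∑' n, prim (gn k V b n) y = ∫ w in Set.Ioi y, ∑' n, gn k V b n w := h2
      _ = prim G y := integral_congr_ae (ae_of_all _ fun w => hptG w)
  -- closed formulas
  have hu₁eq : ∀ y, u₁ y = 1 + (2 * k)⁻¹ * (prim F y - Real.exp (2 * k * y) * prim G y) := by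
    intro y
    have h0 : u₁ y = (seq k V b 0).1 y + ∑' n, (seq k V b (n + 1)).1 y :=
      Summable.tsum_eq_zero_add (hS1 y)
    have hsucc : ∀ n : ℕ, (seq k V b (n + 1)).1 y = (2 * k)⁻¹ *
        (prim (fn k V b n) y - Real.exp (2 * k * y) * prim (gn k V b n) y) :=
      fun n => by rw [seq_succ_fst]
    calc u₁ y = 1 + ∑' n, (2 * k)⁻¹ *
          (prim (fn k V b n) y - Real.exp (2 * k * y) * prim (gn k V b n) y) := by
          rw [h0]; exact congrArg _ (tsum_congr hsucc)
      _ = 1 + (2 * k)⁻¹ * ((∑' n, prim (fn k V b n) y) -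
          ∑' n, Real.exp (2 * k * y) * prim (gn k V b n) y) := by
          rw [tsum_mul_left, Summable.tsum_sub (hSF y) ((hSG y).mul_left _)]
      _ = 1 + (2 * k)⁻¹ * (prim F y - Real.exp (2 * k * y) * prim G y) := by
          rw [hswapF y, tsum_mul_left, hswapG y]
  have hu₂eq : ∀ y, u₂ y = -k - 2⁻¹ * (prim F y + Real.exp (2 * k * y) * prim G y) := by
    intro y
    have h0 : u₂ y = (seq k V b 0).2 y + ∑' n, (seq k V b (n + 1)).2 y :=
      Summable.tsum_eq_zero_add (hS2 y)
    have hsucc : ∀ n : ℕ, (seq k V b (n + 1)).2 y = -(2⁻¹ *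
        (prim (fn k V b n) y + Real.exp (2 * k * y) * prim (gn k V b n) y)) :=
      fun n => by rw [seq_succ_snd]
    calc u₂ y = -k + ∑' n, -(2⁻¹ *
          (prim (fn k V b n) y + Real.exp (2 * k * y) * prim (gn k V b n) y)) := by
          rw [h0]; exact congrArg _ (tsum_congr hsucc)
      _ = -k + -(2⁻¹ * ((∑' n, prim (fn k V b n) y) +
          ∑' n, Real.exp (2 * k * y) * prim (gn k V b n) y)) := by
          rw [tsum_neg, tsum_mul_left, Summable.tsum_add (hSF y) ((hSG y).mul_left _)]
      _ = -k - 2⁻¹ * (prim F y + Real.exp (2 * k * y) * prim G y) := by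
          rw [hswapF y, tsum_mul_left, hswapG y]; ring
  -- derivatives
  have hPd : ∀ y, HasDerivAt (prim F) (-(F y)) y :=
    prim_hasDerivAt hFc hFi.integrableOn
  have hQd : ∀ y, HasDerivAt (prim G) (-(G y)) y :=
    prim_hasDerivAt hGc (hGiy 0)
  have hexp2 : ∀ y, HasDerivAt (fun x => Real.exp (2 * k * x)) (2 * k * Real.exp (2 * k * y)) y := by
    intro y
    have h1 : HasDerivAt (fun x : ℝ => 2 * k * x) (2 * k) y := by
      simpa using (hasDerivAt_id y).const_mul (2 * k)
    simpa [mul_comm] using h1.exp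
  have hGG : ∀ y, Real.exp (2 * k * y) * G y = F y := by
    intro y
    rw [hGdef]
    simp only
    rw [← mul_assoc, ← Real.exp_add, show 2 * k * y + -(2 * k * y) = 0 by ring,
      Real.exp_zero, one_mul]
  have hu₁d : ∀ y, HasDerivAt u₁ (-(Real.exp (2 * k * y) * prim G y)) y := by
    intro y
    have heq : u₁ = fun y => 1 + (2 * k)⁻¹ * (prim F y - Real.exp (2 * k * y) * prim G y) :=
      funext hu₁eq
    rw [heq]
    have hd := (hasDerivAt_const y (1:ℝ)).fun_add
      (((hPd y).fun_sub ((hexp2 y).fun_mul (hQd y))).const_mul (2 * k)⁻¹)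
    refine hd.congr_deriv ?_
    have h2 : Real.exp (2 * k * y) * -(G y) = -(F y) := by rw [mul_neg, hGG y]
    rw [h2]
    field_simp
    ring
  have hu₂d : ∀ y, HasDerivAt u₂ (F y - k * (Real.exp (2 * k * y) * prim G y)) y := by
    intro y
    have heq : u₂ = fun y => -k - 2⁻¹ * (prim F y + Real.exp (2 * k * y) * prim G y) :=
      funext hu₂eq
    rw [heq]
    have hd := (hasDerivAt_const y (-k)).fun_sub
      (((hPd y).fun_add ((hexp2 y).fun_mul (hQd y))).const_mul 2⁻¹)
    refine hd.congr_deriv ?_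
    have h2 : Real.exp (2 * k * y) * -(G y) = -(F y) := by rw [mul_neg, hGG y]
    rw [h2]
    ring
  -- the solution
  set Y : ℝ → ℝ := fun y => Real.exp (-(k * y)) * u₁ y with hYdef
  have hexpneg : ∀ y, HasDerivAt (fun x => Real.exp (-(k * x))) (-k * Real.exp (-(k * y))) y := by
    intro y
    have h1 : HasDerivAt (fun x : ℝ => -(k * x)) (-k) y := by
      simpa using ((hasDerivAt_id y).const_mul k).fun_neg
    simpa [mul_comm] using h1.exp
  have hYd : ∀ y, HasDerivAt Y (Real.exp (-(k * y)) * u₂ y) y := by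
    intro y
    have hd := (hexpneg y).fun_mul (hu₁d y)
    rw [hYdef]
    refine hd.congr_deriv ?_
    rw [hu₁eq y, hu₂eq y]
    field_simp
    ring
  set W : ℝ → ℝ := fun y => Real.exp (-(k * y)) * u₂ y with hWdef
  have hdY : deriv Y = W := funext fun y => (hYd y).deriv
  have hWd : ∀ y, HasDerivAt W (Real.exp (-(k * y)) * (F y + k ^ 2 * u₁ y)) y := by
    intro y
    have hd := (hexpneg y).fun_mul (hu₂d y)
    rw [hWdef]
    refine hd.congr_deriv ?_
    rw [hu₁eq y, hu₂eq y]
    field_simp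
    ring
  set Z : ℝ → ℝ := fun y => Real.exp (-(k * y)) * (F y + k ^ 2 * u₁ y) with hZdef
  have hdW : deriv W = Z := funext fun y => (hWd y).deriv
  have hZc : Continuous Z :=
    (Real.continuous_exp.comp ((continuous_const.mul continuous_id).neg)).mul (hFc.add (continuous_const.mul hu₁c))
  refine ⟨Y, ?_, ?_, ?_, ?_, ?_⟩
  · -- ContDiff
    rw [show (2 : WithTop ℕ∞) = 1 + 1 from rfl, contDiff_succ_iff_deriv]
    refine ⟨fun y => (hYd y).differentiableAt, by simp, ?_⟩
    rw [hdY, contDiff_one_iff_deriv]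
    exact ⟨fun y => (hWd y).differentiableAt, by rw [hdW]; exact hZc⟩
  · -- ODE
    intro y
    rw [hdY, hdW]
    simp only [hZdef, hWdef, hYdef, hFdef]
    ring
  · -- limit of e^{ky} Y
    have hPF0 : Tendsto (prim F) atTop (𝓝 0) := prim_tendsto hFc hFi.integrableOn
    have habs0 : Tendsto (prim (fun w => |F w|)) atTop (𝓝 0) :=
      prim_tendsto hFc.abs hFi.abs.integrableOn
    have hEQb : ∀ y, ‖Real.exp (2 * k * y) * prim G y‖ ≤ prim (fun w => |F w|) y := by
      intro y
      have h1 : |prim G y| ≤ ∫ w in Set.Ioi y, Real.exp (-(2 * k * y)) * |F w| := by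
        refine abs_prim_le y (hGiy y) ((hFi.abs.const_mul _).integrableOn) fun w hw => ?_
        have he1 : Real.exp (-(2 * k * w)) ≤ Real.exp (-(2 * k * y)) :=
          Real.exp_le_exp.2 (by nlinarith)
        calc |G w| = Real.exp (-(2 * k * w)) * |F w| := by
              rw [hGdef]; simp only; rw [abs_mul, abs_of_pos (Real.exp_pos _)]
          _ ≤ Real.exp (-(2 * k * y)) * |F w| :=
              mul_le_mul_of_nonneg_right he1 (abs_nonneg _)
      rw [integral_const_mul] at h1
      rw [Real.norm_eq_abs, abs_mul, abs_of_pos (Real.exp_pos _)]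
      calc Real.exp (2 * k * y) * |prim G y|
          ≤ Real.exp (2 * k * y) * (Real.exp (-(2 * k * y)) * (prim (fun w => |F w|) y)) :=
            mul_le_mul_of_nonneg_left h1 (Real.exp_pos _).le
        _ = (Real.exp (2 * k * y) * Real.exp (-(2 * k * y))) * (prim (fun w => |F w|) y) := by
            ring
        _ = prim (fun w => |F w|) y := by
            rw [← Real.exp_add, show 2 * k * y + -(2 * k * y) = 0 by ring,
              Real.exp_zero, one_mul]
    have hEQ0 : Tendsto (fun y => Real.exp (2 * k * y) * prim G y) atTop (𝓝 0) :=
      squeeze_zero_norm hEQb habs0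
    have hu₁lim : Tendsto u₁ atTop (𝓝 1) := by
      have heq : u₁ = fun y => 1 + (2 * k)⁻¹ * (prim F y - Real.exp (2 * k * y) * prim G y) :=
        funext hu₁eq
      rw [heq]
      have := ((hPF0.sub hEQ0).const_mul (2 * k)⁻¹).const_add 1
      simpa using this
    have heq2 : (fun y => Real.exp (k * y) * Y y) = u₁ := by
      funext y
      rw [hYdef]
      simp only
      rw [← mul_assoc, ← Real.exp_add, show k * y + -(k * y) = 0 by ring,
        Real.exp_zero, one_mul]
    rw [heq2]
    exact hu₁lim
  · -- limit of e^{ky} Y'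
    have hPF0 : Tendsto (prim F) atTop (𝓝 0) := prim_tendsto hFc hFi.integrableOn
    have habs0 : Tendsto (prim (fun w => |F w|)) atTop (𝓝 0) :=
      prim_tendsto hFc.abs hFi.abs.integrableOn
    have hEQb : ∀ y, ‖Real.exp (2 * k * y) * prim G y‖ ≤ prim (fun w => |F w|) y := by
      intro y
      have h1 : |prim G y| ≤ ∫ w in Set.Ioi y, Real.exp (-(2 * k * y)) * |F w| := by
        refine abs_prim_le y (hGiy y) ((hFi.abs.const_mul _).integrableOn) fun w hw => ?_
        have he1 : Real.exp (-(2 * k * w)) ≤ Real.exp (-(2 * k * y)) :=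
          Real.exp_le_exp.2 (by nlinarith)
        calc |G w| = Real.exp (-(2 * k * w)) * |F w| := by
              rw [hGdef]; simp only; rw [abs_mul, abs_of_pos (Real.exp_pos _)]
          _ ≤ Real.exp (-(2 * k * y)) * |F w| :=
              mul_le_mul_of_nonneg_right he1 (abs_nonneg _)
      rw [integral_const_mul] at h1
      rw [Real.norm_eq_abs, abs_mul, abs_of_pos (Real.exp_pos _)]
      calc Real.exp (2 * k * y) * |prim G y|
          ≤ Real.exp (2 * k * y) * (Real.exp (-(2 * k * y)) * (prim (fun w => |F w|) y)) :=
            mul_le_mul_of_nonneg_left h1 (Real.exp_pos _).le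
        _ = (Real.exp (2 * k * y) * Real.exp (-(2 * k * y))) * (prim (fun w => |F w|) y) := by
            ring
        _ = prim (fun w => |F w|) y := by
            rw [← Real.exp_add, show 2 * k * y + -(2 * k * y) = 0 by ring,
              Real.exp_zero, one_mul]
    have hEQ0 : Tendsto (fun y => Real.exp (2 * k * y) * prim G y) atTop (𝓝 0) :=
      squeeze_zero_norm hEQb habs0
    have hu₂lim : Tendsto u₂ atTop (𝓝 (-k)) := by
      have heq : u₂ = fun y => -k - 2⁻¹ * (prim F y + Real.exp (2 * k * y) * prim G y) :=
        funext hu₂eq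
      rw [heq]
      have h3 := (tendsto_const_nhds (x := (-k : ℝ)) (f := atTop)).sub
        (((hPF0.add hEQ0).const_mul 2⁻¹))
      simpa using h3
    have heq2 : (fun y => Real.exp (k * y) * deriv Y y) = u₂ := by
      funext y
      rw [hdY, hWdef]
      simp only
      rw [← mul_assoc, ← Real.exp_add, show k * y + -(k * y) = 0 by ring,
        Real.exp_zero, one_mul]
    rw [heq2]
    exact hu₂lim
  · -- decay bound
    intro y _
    have h1 : |Y y| = Real.exp (-(k * y)) * |u₁ y| := by
      rw [hYdef]; simp only; rw [abs_mul, abs_of_pos (Real.exp_pos _)]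
    rw [h1, show -k * y = -(k * y) by ring, mul_comm]
    exact mul_le_mul_of_nonneg_right (hu₁b y) (Real.exp_pos _).le
end

section
/- (Existence of bounded solution at threshold) Let V, b be continuous on ℝ with (1+y²)^{1/2}V and (1+y²)^{1/2}b in L^1(ℝ). Then there exists a C² function Y : ℝ → ℝ solving Y'' + b(y)Y' = V(y)Y, with Y(y) → 1 and Y'(y) → 0 as y → +∞; moreover Y satisfies the integral equation Y(y) = 1 − ∫_y^∞ (V(w)Y(w) − b(w)Y'(w))·(y−w) dw and Y'(y) = −∫_y^∞ (V(w)Y(w) − b(w)Y'(w)) dw. -/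
open MeasureTheory Real Filter Set Topology
open scoped BoundedContinuousFunction

lemma int_Ioi_split {G : ℝ → ℝ} {a : ℝ} (hGi : IntegrableOn G (Ioi a)) {t : ℝ} (ht : a ≤ t) :
    ∫ w in Ioi t, G w = (∫ w in Ioi a, G w) - ∫ w in a..t, G w := by
  have h2 : IntegrableOn G (Ioc a t) := hGi.mono_set (fun x hx => hx.1)
  have h3 : IntegrableOn G (Ioi t) := hGi.mono_set (fun x hx => lt_of_le_of_lt ht hx)
  have hu := setIntegral_union (Ioc_disjoint_Ioi le_rfl) measurableSet_Ioi h2 h3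
  rw [Ioc_union_Ioi_eq_Ioi ht] at hu
  rw [intervalIntegral.integral_of_le ht]
  linarith

lemma hasDerivAt_int_Ioi {G : ℝ → ℝ} (hGc : Continuous G) {a y : ℝ} (hay : a < y)
    (hGi : IntegrableOn G (Ioi a)) :
    HasDerivAt (fun t => ∫ w in Ioi t, G w) (-G y) y := by
  have hii : IntervalIntegrable G volume a y := by
    rw [intervalIntegrable_iff_integrableOn_Ioc_of_le hay.le]
    exact hGi.mono_set (fun x hx => hx.1)
  have h1 : HasDerivAt (fun t => ∫ w in a..t, G w) (G y) y :=
    intervalIntegral.integral_hasDerivAt_right hii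
      hGc.aestronglyMeasurable.stronglyMeasurableAtFilter hGc.continuousAt
  have h2 := (hasDerivAt_const y (∫ w in Ioi a, G w)).sub h1
  rw [zero_sub] at h2
  apply h2.congr_of_eventuallyEq
  filter_upwards [Ioi_mem_nhds hay] with t ht
  exact int_Ioi_split hGi ht.le

lemma tendsto_int_Ioi_zero {G : ℝ → ℝ} (hGi : Integrable G) :
    Tendsto (fun t => ∫ w in Ioi t, G w) atTop (𝓝 0) := by
  have h := intervalIntegral_tendsto_integral_Ioi 0 hGi.integrableOn tendsto_id
  have h2 : Tendsto (fun t => (∫ w in Ioi (0:ℝ), G w) - ∫ w in (0:ℝ)..t, G w) atTop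
      (𝓝 ((∫ w in Ioi (0:ℝ), G w) - ∫ w in Ioi (0:ℝ), G w)) := tendsto_const_nhds.sub h
  rw [sub_self] at h2
  apply h2.congr'
  filter_upwards [Ioi_mem_atTop (0:ℝ)] with t ht
  exact (int_Ioi_split hGi.integrableOn ht.le).symm

lemma split_int {F : ℝ → ℝ} {c : ℝ} (h1 : IntegrableOn (fun w => w * F w) (Ioi c))
    (h2 : IntegrableOn F (Ioi c)) :
    ∫ w in Ioi c, (w - c) * F w = (∫ w in Ioi c, w * F w) - c * ∫ w in Ioi c, F w := by
  have : ∀ w, (w - c) * F w = w * F w - c * F w := fun w => by ring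
  simp_rw [this]
  rw [integral_sub h1 (h2.const_mul c), MeasureTheory.integral_const_mul]

namespace Jost

/-- Hypotheses bundle. -/
structure Hyp (V b : ℝ → ℝ) : Prop where
  hV : Continuous V
  hb : Continuous b
  hVint : Integrable (fun y => Real.sqrt (1 + y ^ 2) * V y)
  hbint : Integrable (fun y => Real.sqrt (1 + y ^ 2) * b y)

variable {V b : ℝ → ℝ}

noncomputable def h (V b : ℝ → ℝ) : ℝ → ℝ := fun w => |V w| + |b w|
noncomputable def A (V b : ℝ → ℝ) : ℝ → ℝ := fun y => ∫ w in Ioi y, (w + 1) * h V b w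
noncomputable def B (V b : ℝ → ℝ) : ℝ → ℝ := fun y => ∫ w in Ioi y, h V b w
noncomputable def eta (V b : ℝ → ℝ) : ℝ → ℝ := fun y => A V b y - y * B V b y
/-- comparison weight with base point `y` -/
noncomputable def phi (V b : ℝ → ℝ) (y : ℝ) : ℝ → ℝ := fun w => A V b w - y * B V b w

lemma Hyp.h_cont (H : Hyp V b) : Continuous (h V b) := H.hV.abs.add H.hb.abs

lemma h_nonneg (V b : ℝ → ℝ) (w : ℝ) : 0 ≤ h V b w := add_nonneg (abs_nonneg _) (abs_nonneg _)

lemma Hyp.g_int (H : Hyp V b) : Integrable (fun w => (1 + |w|) * h V b w) := by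
  have hM : Integrable (fun w => 2 * |Real.sqrt (1 + w ^ 2) * V w| +
      2 * |Real.sqrt (1 + w ^ 2) * b w|) :=
    (H.hVint.abs.const_mul 2).add (H.hbint.abs.const_mul 2)
  refine hM.mono' (((continuous_const.add continuous_abs).mul H.h_cont).aestronglyMeasurable) ?_
  filter_upwards with w
  have h1 : (1:ℝ) ≤ Real.sqrt (1 + w ^ 2) := by
    have := Real.sqrt_le_sqrt (show (1:ℝ) ≤ 1 + w ^ 2 by nlinarith)
    rwa [Real.sqrt_one] at this
  have h2 : |w| ≤ Real.sqrt (1 + w ^ 2) := by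
    rw [← Real.sqrt_sq_eq_abs]
    exact Real.sqrt_le_sqrt (by nlinarith)
  have h3 : 0 ≤ h V b w := h_nonneg V b w
  rw [Real.norm_eq_abs, abs_of_nonneg (by positivity)]
  calc (1 + |w|) * h V b w ≤ (2 * Real.sqrt (1 + w ^ 2)) * h V b w :=
        mul_le_mul_of_nonneg_right (by linarith) h3
    _ = 2 * |Real.sqrt (1 + w ^ 2) * V w| + 2 * |Real.sqrt (1 + w ^ 2) * b w| := by
        rw [abs_mul, abs_mul, abs_of_nonneg (Real.sqrt_nonneg _)]
        unfold h; ring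

lemma Hyp.h_int (H : Hyp V b) : Integrable (h V b) := by
  refine H.g_int.mono' H.h_cont.aestronglyMeasurable ?_
  filter_upwards with w
  have h3 := h_nonneg V b w
  rw [Real.norm_eq_abs, abs_of_nonneg h3]
  nlinarith [abs_nonneg w]

lemma Hyp.wh_int (H : Hyp V b) : Integrable (fun w => (w + 1) * h V b w) := by
  refine H.g_int.mono'
    (((continuous_id.add continuous_const).mul H.h_cont).aestronglyMeasurable) ?_
  filter_upwards with w
  have h3 := h_nonneg V b w
  rw [Real.norm_eq_abs, abs_mul, abs_of_nonneg h3]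
  have : |w + 1| ≤ 1 + |w| := by
    calc |w + 1| ≤ |w| + |1| := abs_add_le _ _
      _ = 1 + |w| := by simp [add_comm]
  exact mul_le_mul_of_nonneg_right this h3

lemma Hyp.A_hasDeriv (H : Hyp V b) (y : ℝ) : HasDerivAt (A V b) (-((y + 1) * h V b y)) y :=
  hasDerivAt_int_Ioi ((continuous_id.add continuous_const).mul H.h_cont)
    (show y - 1 < y by linarith) H.wh_int.integrableOn

lemma Hyp.B_hasDeriv (H : Hyp V b) (y : ℝ) : HasDerivAt (B V b) (-(h V b y)) y :=
  hasDerivAt_int_Ioi H.h_cont (show y - 1 < y by linarith) H.h_int.integrableOn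

lemma B_nonneg (V b : ℝ → ℝ) (y : ℝ) : 0 ≤ B V b y :=
  setIntegral_nonneg measurableSet_Ioi (fun w _ => h_nonneg V b w)

lemma Hyp.phi_hasDeriv (H : Hyp V b) (y w : ℝ) :
    HasDerivAt (phi V b y) (-((w + 1 - y) * h V b w)) w := by
  have := (H.A_hasDeriv w).sub ((H.B_hasDeriv w).const_mul y)
  refine this.congr_deriv ?_
  ring

lemma Hyp.eta_hasDeriv (H : Hyp V b) (y : ℝ) :
    HasDerivAt (eta V b) (-(h V b y + B V b y)) y := by
  have := (H.A_hasDeriv y).sub ((hasDerivAt_id y).mul (H.B_hasDeriv y))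
  refine this.congr_deriv ?_
  simp only [id_eq]
  ring

lemma Hyp.eta_cont (H : Hyp V b) : Continuous (eta V b) :=
  continuous_iff_continuousAt.2 fun y => (H.eta_hasDeriv y).continuousAt

lemma Hyp.eta_eq (H : Hyp V b) (y : ℝ) :
    eta V b y = ∫ w in Ioi y, ((w + 1) * h V b w - y * h V b w) := by
  rw [integral_sub H.wh_int.integrableOn (H.h_int.integrableOn.const_mul y),
    MeasureTheory.integral_const_mul]
  rfl

lemma Hyp.eta_nonneg (H : Hyp V b) (y : ℝ) : 0 ≤ eta V b y := by
  rw [H.eta_eq]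
  apply setIntegral_nonneg measurableSet_Ioi
  intro w hw
  rw [mem_Ioi] at hw
  nlinarith [h_nonneg V b w]

lemma eta_le_phi (V b : ℝ → ℝ) (y w : ℝ) (hw : y ≤ w) : eta V b w ≤ phi V b y w := by
  have hB := B_nonneg V b w
  unfold eta phi
  nlinarith

lemma Hyp.phi_anti (H : Hyp V b) (y : ℝ) : AntitoneOn (phi V b y) (Ici y) := by
  apply antitoneOn_of_deriv_nonpos (convex_Ici y)
  · exact Continuous.continuousOn (continuous_iff_continuousAt.2 fun w =>
      (H.phi_hasDeriv y w).continuousAt)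
  · intro w _
    exact (H.phi_hasDeriv y w).differentiableAt.differentiableWithinAt
  · intro w hw
    rw [interior_Ici, mem_Ioi] at hw
    rw [(H.phi_hasDeriv y w).deriv]
    nlinarith [h_nonneg V b w]

lemma Hyp.eta_anti (H : Hyp V b) {a w : ℝ} (haw : a ≤ w) : eta V b w ≤ eta V b a :=
  calc eta V b w ≤ phi V b a w := eta_le_phi V b a w haw
    _ ≤ phi V b a a := H.phi_anti a self_mem_Ici (mem_Ici.2 haw) haw
    _ = eta V b a := rfl

lemma Hyp.eta_tendsto (H : Hyp V b) : Tendsto (eta V b) atTop (𝓝 0) := by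
  have hA : Tendsto (A V b) atTop (𝓝 0) := tendsto_int_Ioi_zero H.wh_int
  apply tendsto_of_tendsto_of_tendsto_of_le_of_le' tendsto_const_nhds hA
  · filter_upwards with y using H.eta_nonneg y
  · filter_upwards [Ioi_mem_atTop (0:ℝ)] with y hy
    rw [mem_Ioi] at hy
    rw [H.eta_eq]
    apply setIntegral_mono_on
      (H.wh_int.integrableOn.sub (H.h_int.integrableOn.const_mul y)) H.wh_int.integrableOn
      measurableSet_Ioi
    intro w hw
    rw [mem_Ioi] at hw
    simp only [Pi.sub_apply]
    nlinarith [h_nonneg V b w]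

end Jost

namespace Jost
variable {V b : ℝ → ℝ}

lemma Hyp.phi_cont (H : Hyp V b) (y : ℝ) : Continuous (phi V b y) :=
  continuous_iff_continuousAt.2 fun w => (H.phi_hasDeriv y w).continuousAt

lemma Hyp.key_int (H : Hyp V b) (y : ℝ) :
    IntegrableOn (fun w => (w + 1 - y) * h V b w * Real.exp (2 * phi V b y w)) (Ioi y) := by
  have hcont : Continuous (fun w => (w + 1 - y) * h V b w * Real.exp (2 * phi V b y w)) :=
    (((continuous_id.add continuous_const).sub continuous_const).mul H.h_cont).mul
      (Real.continuous_exp.comp (continuous_const.mul (H.phi_cont y)))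
  refine ((H.g_int.const_mul (2 * (1 + |y|) * Real.exp (2 * eta V b y))).integrableOn).mono'
    hcont.aestronglyMeasurable.restrict ?_
  rw [ae_restrict_iff' measurableSet_Ioi]
  filter_upwards with w hw
  rw [mem_Ioi] at hw
  have h3 := h_nonneg V b w
  have hpy : phi V b y y = eta V b y := rfl
  have hexp : Real.exp (2 * phi V b y w) ≤ Real.exp (2 * eta V b y) := by
    apply Real.exp_le_exp.2
    have := H.phi_anti y self_mem_Ici (mem_Ici.2 hw.le) hw.le
    rw [hpy] at this
    linarith
  have h4 : (0:ℝ) ≤ w + 1 - y := by linarith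
  have h5 : w + 1 - y ≤ 2 * (1 + |y|) * (1 + |w|) := by
    nlinarith [abs_nonneg w, abs_nonneg y, le_abs_self w, neg_abs_le y,
      mul_nonneg (abs_nonneg y) (abs_nonneg w)]
  rw [Real.norm_eq_abs, abs_of_nonneg (mul_nonneg (mul_nonneg h4 h3) (Real.exp_nonneg _))]
  calc (w + 1 - y) * h V b w * Real.exp (2 * phi V b y w)
      ≤ (w + 1 - y) * h V b w * Real.exp (2 * eta V b y) :=
        mul_le_mul_of_nonneg_left hexp (mul_nonneg h4 h3)
    _ ≤ (2 * (1 + |y|) * (1 + |w|)) * h V b w * Real.exp (2 * eta V b y) :=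
        mul_le_mul_of_nonneg_right (mul_le_mul_of_nonneg_right h5 h3) (Real.exp_nonneg _)
    _ = (2 * (1 + |y|) * Real.exp (2 * eta V b y)) * ((1 + |w|) * h V b w) := by ring

lemma Hyp.key_eq (H : Hyp V b) (y : ℝ) :
    ∫ w in Ioi y, (w + 1 - y) * h V b w * Real.exp (2 * phi V b y w)
      = (Real.exp (2 * eta V b y) - 1) / 2 := by
  have hd : ∀ w ∈ Ici y, HasDerivAt (fun w => -(Real.exp (2 * phi V b y w) / 2))
      ((w + 1 - y) * h V b w * Real.exp (2 * phi V b y w)) w := by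
    intro w _
    have := (((H.phi_hasDeriv y w).const_mul 2).exp.div_const 2).neg
    refine this.congr_deriv ?_
    ring
  have htend : Tendsto (fun w => -(Real.exp (2 * phi V b y w) / 2)) atTop (𝓝 (-(1/2))) := by
    have hA : Tendsto (A V b) atTop (𝓝 0) := tendsto_int_Ioi_zero H.wh_int
    have hB : Tendsto (B V b) atTop (𝓝 0) := tendsto_int_Ioi_zero H.h_int
    have h0 : Tendsto (phi V b y) atTop (𝓝 0) := by
      have := hA.sub (hB.const_mul y)
      rw [mul_zero, sub_zero] at this
      exact this
    have h1 : Tendsto (fun w => Real.exp (2 * phi V b y w)) atTop (𝓝 (Real.exp (2 * 0))) :=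
      (Real.continuous_exp.tendsto _).comp (h0.const_mul 2)
    rw [mul_zero, Real.exp_zero] at h1
    have := (h1.div_const 2).neg
    convert this using 2
  have heval := integral_Ioi_of_hasDerivAt_of_tendsto' hd (H.key_int y) htend
  rw [heval]
  have hpy : phi V b y y = eta V b y := rfl
  rw [hpy]
  ring

lemma Hyp.key_mono (H : Hyp V b) {y c : ℝ} {F : ℝ → ℝ}
    (hF : AEStronglyMeasurable F (volume.restrict (Ioi y))) (hc : 0 ≤ c)
    (hbd : ∀ w ∈ Ioi y, |F w| ≤ c * ((w + 1 - y) * h V b w * Real.exp (2 * phi V b y w))) :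
    IntegrableOn F (Ioi y) ∧
      |∫ w in Ioi y, F w| ≤ c * ((Real.exp (2 * eta V b y) - 1) / 2) := by
  have hmaj : IntegrableOn
      (fun w => c * ((w + 1 - y) * h V b w * Real.exp (2 * phi V b y w))) (Ioi y) :=
    (H.key_int y).const_mul c
  have hint : IntegrableOn F (Ioi y) := by
    refine hmaj.mono' hF ?_
    rw [ae_restrict_iff' measurableSet_Ioi]
    filter_upwards with w hw
    rw [Real.norm_eq_abs]; exact hbd w hw
  refine ⟨hint, ?_⟩
  have habs := norm_integral_le_integral_norm (μ := volume.restrict (Ioi y)) F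
  simp only [Real.norm_eq_abs] at habs
  calc |∫ w in Ioi y, F w| ≤ ∫ w in Ioi y, |F w| := habs
    _ ≤ ∫ w in Ioi y, c * ((w + 1 - y) * h V b w * Real.exp (2 * phi V b y w)) :=
        setIntegral_mono_on hint.abs hmaj measurableSet_Ioi (fun w hw => hbd w hw)
    _ = c * ((Real.exp (2 * eta V b y) - 1) / 2) := by
        rw [MeasureTheory.integral_const_mul, H.key_eq y]

end Jost

namespace Jost
variable {V b : ℝ → ℝ}

/-- the nonlinearity attached to a candidate `W` in the weighted space -/
noncomputable def fw (V b : ℝ → ℝ) (W : ℝ →ᵇ (ℝ × ℝ)) : ℝ → ℝ := fun w =>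
  V w * (Real.exp (2 * eta V b w) * (W w).1) - b w * (Real.exp (2 * eta V b w) * (W w).2)

lemma Hyp.fw_cont (H : Hyp V b) (W : ℝ →ᵇ (ℝ × ℝ)) : Continuous (fw V b W) := by
  have he : Continuous (fun w => Real.exp (2 * eta V b w)) :=
    Real.continuous_exp.comp (continuous_const.mul H.eta_cont)
  exact (H.hV.mul (he.mul (continuous_fst.comp W.continuous))).sub
    (H.hb.mul (he.mul (continuous_snd.comp W.continuous)))

lemma Hyp.fw_bound (H : Hyp V b) (W : ℝ →ᵇ (ℝ × ℝ)) (w : ℝ) :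
    |fw V b W w| ≤ ‖W‖ * (h V b w * Real.exp (2 * eta V b w)) := by
  have h1 : |(W w).1| ≤ ‖W‖ := le_trans (norm_fst_le (W w)) (W.norm_coe_le_norm w)
  have h2 : |(W w).2| ≤ ‖W‖ := le_trans (norm_snd_le (W w)) (W.norm_coe_le_norm w)
  have hE := Real.exp_nonneg (2 * eta V b w)
  calc |fw V b W w|
      ≤ |V w * (Real.exp (2 * eta V b w) * (W w).1)|
        + |b w * (Real.exp (2 * eta V b w) * (W w).2)| := abs_sub _ _
    _ = |V w| * (Real.exp (2 * eta V b w) * |(W w).1|)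
        + |b w| * (Real.exp (2 * eta V b w) * |(W w).2|) := by
        rw [abs_mul, abs_mul, abs_mul, abs_mul, abs_of_nonneg hE]
    _ ≤ |V w| * (Real.exp (2 * eta V b w) * ‖W‖)
        + |b w| * (Real.exp (2 * eta V b w) * ‖W‖) := by
        gcongr <;> first | exact abs_nonneg _ | exact h1 | exact h2 | positivity
    _ = ‖W‖ * (h V b w * Real.exp (2 * eta V b w)) := by unfold h; ring

lemma Hyp.fw_intOn (H : Hyp V b) (W : ℝ →ᵇ (ℝ × ℝ)) (a : ℝ) :
    IntegrableOn (fw V b W) (Ioi a) ∧ IntegrableOn (fun w => w * fw V b W w) (Ioi a) := by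
  have maj : Integrable (fun w => (‖W‖ * Real.exp (2 * eta V b a)) * ((1 + |w|) * h V b w)) :=
    H.g_int.const_mul _
  have hptw : ∀ w, a < w →
      |fw V b W w| ≤ (‖W‖ * Real.exp (2 * eta V b a)) * (1 * h V b w) := by
    intro w hw
    have hE : Real.exp (2 * eta V b w) ≤ Real.exp (2 * eta V b a) :=
      Real.exp_le_exp.2 (by linarith [H.eta_anti hw.le])
    calc |fw V b W w| ≤ ‖W‖ * (h V b w * Real.exp (2 * eta V b w)) := H.fw_bound W w
      _ ≤ ‖W‖ * (h V b w * Real.exp (2 * eta V b a)) := by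
          apply mul_le_mul_of_nonneg_left _ (norm_nonneg W)
          exact mul_le_mul_of_nonneg_left hE (h_nonneg V b w)
      _ = (‖W‖ * Real.exp (2 * eta V b a)) * (1 * h V b w) := by ring
  constructor
  · refine maj.integrableOn.mono' (H.fw_cont W).aestronglyMeasurable.restrict ?_
    rw [ae_restrict_iff' measurableSet_Ioi]
    filter_upwards with w hw
    rw [mem_Ioi] at hw
    rw [Real.norm_eq_abs]
    refine (hptw w hw).trans ?_
    have hnn : (0:ℝ) ≤ ‖W‖ * Real.exp (2 * eta V b a) :=
      mul_nonneg (norm_nonneg _) (Real.exp_nonneg _)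
    apply mul_le_mul_of_nonneg_left _ hnn
    nlinarith [h_nonneg V b w, abs_nonneg w]
  · refine maj.integrableOn.mono'
      ((continuous_id.mul (H.fw_cont W)).aestronglyMeasurable.restrict) ?_
    rw [ae_restrict_iff' measurableSet_Ioi]
    filter_upwards with w hw
    rw [mem_Ioi] at hw
    rw [Real.norm_eq_abs, abs_mul]
    have hnn : (0:ℝ) ≤ ‖W‖ * Real.exp (2 * eta V b a) :=
      mul_nonneg (norm_nonneg _) (Real.exp_nonneg _)
    calc |w| * |fw V b W w| ≤ |w| * ((‖W‖ * Real.exp (2 * eta V b a)) * (1 * h V b w)) :=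
          mul_le_mul_of_nonneg_left (hptw w hw) (abs_nonneg w)
      _ = (‖W‖ * Real.exp (2 * eta V b a)) * (|w| * h V b w) := by ring
      _ ≤ (‖W‖ * Real.exp (2 * eta V b a)) * ((1 + |w|) * h V b w) := by
          apply mul_le_mul_of_nonneg_left _ hnn
          nlinarith [h_nonneg V b w]

lemma Hyp.fw_key (H : Hyp V b) (W : ℝ →ᵇ (ℝ × ℝ)) (y : ℝ) :
    |∫ w in Ioi y, (w - y) * fw V b W w| ≤ ‖W‖ * ((Real.exp (2 * eta V b y) - 1) / 2) ∧
    |∫ w in Ioi y, fw V b W w| ≤ ‖W‖ * ((Real.exp (2 * eta V b y) - 1) / 2) := by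
  have key : ∀ w, y < w →
      |fw V b W w| ≤ ‖W‖ * (h V b w * Real.exp (2 * phi V b y w)) := by
    intro w hw
    have hE : Real.exp (2 * eta V b w) ≤ Real.exp (2 * phi V b y w) :=
      Real.exp_le_exp.2 (by linarith [eta_le_phi V b y w hw.le])
    exact (H.fw_bound W w).trans
      (mul_le_mul_of_nonneg_left (mul_le_mul_of_nonneg_left hE (h_nonneg V b w)) (norm_nonneg W))
  have hnn : ∀ w, (0:ℝ) ≤ ‖W‖ * (h V b w * Real.exp (2 * phi V b y w)) := fun w =>
    mul_nonneg (norm_nonneg _) (mul_nonneg (h_nonneg V b w) (Real.exp_nonneg _))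
  constructor
  · refine (H.key_mono (((continuous_id.sub continuous_const).mul
      (H.fw_cont W)).aestronglyMeasurable.restrict) (norm_nonneg W) ?_).2
    intro w hw
    rw [mem_Ioi] at hw
    show |(w - y) * fw V b W w| ≤ _
    rw [abs_mul, abs_of_nonneg (by linarith : (0:ℝ) ≤ w - y)]
    calc (w - y) * |fw V b W w|
        ≤ (w - y) * (‖W‖ * (h V b w * Real.exp (2 * phi V b y w))) :=
          mul_le_mul_of_nonneg_left (key w hw) (by linarith)
      _ ≤ (w + 1 - y) * (‖W‖ * (h V b w * Real.exp (2 * phi V b y w))) :=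
          mul_le_mul_of_nonneg_right (by linarith) (hnn w)
      _ = ‖W‖ * ((w + 1 - y) * h V b w * Real.exp (2 * phi V b y w)) := by ring
  · refine (H.key_mono ((H.fw_cont W).aestronglyMeasurable.restrict) (norm_nonneg W) ?_).2
    intro w hw
    rw [mem_Ioi] at hw
    calc |fw V b W w| ≤ ‖W‖ * (h V b w * Real.exp (2 * phi V b y w)) := key w hw
      _ ≤ (w + 1 - y) * (‖W‖ * (h V b w * Real.exp (2 * phi V b y w))) :=
          le_mul_of_one_le_left (hnn w) (by linarith)
      _ = ‖W‖ * ((w + 1 - y) * h V b w * Real.exp (2 * phi V b y w)) := by ring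

end Jost

namespace Jost
variable {V b : ℝ → ℝ}

lemma Hyp.exp_shrink (H : Hyp V b) (y : ℝ) {t r : ℝ} (hr : 0 ≤ r)
    (ht : |t| ≤ r * ((Real.exp (2 * eta V b y) - 1) / 2)) :
    |Real.exp (-(2 * eta V b y)) * t| ≤ r / 2 := by
  have hx1 : 1 ≤ Real.exp (2 * eta V b y) := by
    rw [show (1:ℝ) = Real.exp 0 by rw [Real.exp_zero]]
    exact Real.exp_le_exp.2 (by nlinarith [H.eta_nonneg y])
  have hxpos : 0 < Real.exp (2 * eta V b y) := Real.exp_pos _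
  rw [Real.exp_neg, abs_mul, abs_of_nonneg (inv_nonneg.2 hxpos.le)]
  set x := Real.exp (2 * eta V b y)
  have hinv : x⁻¹ * x = 1 := inv_mul_cancel₀ hxpos.ne'
  have h2 : x⁻¹ * |t| ≤ x⁻¹ * (r * ((x - 1) / 2)) :=
    mul_le_mul_of_nonneg_left ht (inv_nonneg.2 hxpos.le)
  nlinarith [mul_nonneg (inv_nonneg.2 hxpos.le) hr, inv_nonneg.2 hxpos.le]

/-- the underlying map of the operator -/
noncomputable def phiMap (V b : ℝ → ℝ) (W : ℝ →ᵇ (ℝ × ℝ)) : ℝ → ℝ × ℝ := fun y =>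
  (Real.exp (-(2 * eta V b y)) *
      (1 + ((∫ w in Ioi y, w * fw V b W w) - y * ∫ w in Ioi y, fw V b W w)),
   Real.exp (-(2 * eta V b y)) * (-∫ w in Ioi y, fw V b W w))

lemma Hyp.S_eq (H : Hyp V b) (W : ℝ →ᵇ (ℝ × ℝ)) (y : ℝ) :
    (∫ w in Ioi y, w * fw V b W w) - y * ∫ w in Ioi y, fw V b W w
      = ∫ w in Ioi y, (w - y) * fw V b W w :=
  (split_int (H.fw_intOn W y).2 (H.fw_intOn W y).1).symm

lemma Hyp.phiMap_cont (H : Hyp V b) (W : ℝ →ᵇ (ℝ × ℝ)) : Continuous (phiMap V b W) := by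
  have he : Continuous (fun y => Real.exp (-(2 * eta V b y))) :=
    Real.continuous_exp.comp (continuous_const.mul H.eta_cont).neg
  have hI1 : Continuous (fun y => ∫ w in Ioi y, w * fw V b W w) :=
    continuous_iff_continuousAt.2 fun y =>
      (hasDerivAt_int_Ioi
        (show Continuous (fun w => w * fw V b W w) from continuous_id.mul (H.fw_cont W))
        (show y - 1 < y by linarith) (H.fw_intOn W (y - 1)).2).continuousAt
  have hI2 : Continuous (fun y => ∫ w in Ioi y, fw V b W w) :=
    continuous_iff_continuousAt.2 fun y =>
      (hasDerivAt_int_Ioi (H.fw_cont W)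
        (show y - 1 < y by linarith) (H.fw_intOn W (y - 1)).1).continuousAt
  exact (he.mul (continuous_const.add (hI1.sub (continuous_id.mul hI2)))).prodMk (he.mul hI2.neg)

lemma Hyp.phiMap_bound (H : Hyp V b) (W : ℝ →ᵇ (ℝ × ℝ)) (y : ℝ) :
    ‖phiMap V b W y‖ ≤ 1 + ‖W‖ := by
  have hexple : Real.exp (-(2 * eta V b y)) ≤ 1 := by
    rw [show (1:ℝ) = Real.exp 0 by rw [Real.exp_zero]]
    exact Real.exp_le_exp.2 (by nlinarith [H.eta_nonneg y])
  rw [Prod.norm_def]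
  apply max_le
  · rw [Real.norm_eq_abs]
    show |Real.exp (-(2 * eta V b y)) * (1 + _)| ≤ _
    rw [mul_add, mul_one]
    refine (abs_add_le _ _).trans ?_
    have h1 : |Real.exp (-(2 * eta V b y))| ≤ 1 := by
      rw [abs_of_nonneg (Real.exp_nonneg _)]; exact hexple
    have h2 : |Real.exp (-(2 * eta V b y)) *
        ((∫ w in Ioi y, w * fw V b W w) - y * ∫ w in Ioi y, fw V b W w)| ≤ ‖W‖ / 2 := by
      apply H.exp_shrink y (norm_nonneg W)
      rw [H.S_eq W y]
      exact (H.fw_key W y).1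
    linarith [norm_nonneg W]
  · rw [Real.norm_eq_abs]
    show |Real.exp (-(2 * eta V b y)) * (-∫ w in Ioi y, fw V b W w)| ≤ _
    have h2 : |Real.exp (-(2 * eta V b y)) * (-∫ w in Ioi y, fw V b W w)| ≤ ‖W‖ / 2 := by
      apply H.exp_shrink y (norm_nonneg W)
      rw [abs_neg]
      exact (H.fw_key W y).2
    linarith [norm_nonneg W]

/-- the contraction operator -/
noncomputable def Hyp.Phi (H : Hyp V b) (W : ℝ →ᵇ (ℝ × ℝ)) : ℝ →ᵇ (ℝ × ℝ) :=
  BoundedContinuousFunction.ofNormedAddCommGroup (phiMap V b W) (H.phiMap_cont W)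
    (1 + ‖W‖) (H.phiMap_bound W)

lemma Hyp.Phi_apply (H : Hyp V b) (W : ℝ →ᵇ (ℝ × ℝ)) (y : ℝ) :
    H.Phi W y = phiMap V b W y := rfl

lemma fw_sub (V b : ℝ → ℝ) (W W' : ℝ →ᵇ (ℝ × ℝ)) (w : ℝ) :
    fw V b (W - W') w = fw V b W w - fw V b W' w := by
  simp only [fw, BoundedContinuousFunction.sub_apply, Prod.fst_sub, Prod.snd_sub]
  ring

lemma Hyp.Phi_lip (H : Hyp V b) (W W' : ℝ →ᵇ (ℝ × ℝ)) :
    dist (H.Phi W) (H.Phi W') ≤ (1 / 2) * dist W W' := by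
  have hd : (0:ℝ) ≤ 1 / 2 * dist W W' := by positivity
  rw [BoundedContinuousFunction.dist_le hd]
  intro y
  rw [H.Phi_apply, H.Phi_apply, Prod.dist_eq]
  set Δ := W - W' with hΔ
  have hΔn : ‖Δ‖ = dist W W' := by rw [hΔ, ← dist_eq_norm]
  have hpt1 : ∀ w, w * fw V b Δ w = w * fw V b W w - w * fw V b W' w := fun w => by
    rw [fw_sub]; ring
  have hpt2 : ∀ w, fw V b Δ w = fw V b W w - fw V b W' w := fun w => fw_sub V b W W' w
  have e1 : ∫ w in Ioi y, w * fw V b Δ w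
      = (∫ w in Ioi y, w * fw V b W w) - ∫ w in Ioi y, w * fw V b W' w := by
    simp_rw [hpt1]
    exact integral_sub (H.fw_intOn W y).2 (H.fw_intOn W' y).2
  have e2 : ∫ w in Ioi y, fw V b Δ w
      = (∫ w in Ioi y, fw V b W w) - ∫ w in Ioi y, fw V b W' w := by
    simp_rw [hpt2]
    exact integral_sub (H.fw_intOn W y).1 (H.fw_intOn W' y).1
  apply max_le
  · rw [Real.dist_eq]
    have key : (phiMap V b W y).1 - (phiMap V b W' y).1
        = Real.exp (-(2 * eta V b y)) * ∫ w in Ioi y, (w - y) * fw V b Δ w := by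
      simp only [phiMap]
      rw [← H.S_eq Δ y, e1, e2]
      ring
    rw [key]
    have := H.exp_shrink y (r := ‖Δ‖) (norm_nonneg Δ) (H.fw_key Δ y).1
    rw [hΔn] at this
    linarith
  · rw [Real.dist_eq]
    have key : (phiMap V b W y).2 - (phiMap V b W' y).2
        = Real.exp (-(2 * eta V b y)) * (-∫ w in Ioi y, fw V b Δ w) := by
      simp only [phiMap]
      rw [e2]
      ring
    rw [key]
    have habs : |(-∫ w in Ioi y, fw V b Δ w)| ≤ ‖Δ‖ * ((Real.exp (2 * eta V b y) - 1) / 2) := by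
      rw [abs_neg]; exact (H.fw_key Δ y).2
    have := H.exp_shrink y (r := ‖Δ‖) (norm_nonneg Δ) habs
    rw [hΔn] at this
    linarith

end Jost

namespace Jost
variable {V b : ℝ → ℝ}

lemma Hyp.exists_sol (H : Hyp V b) :
    ∃ Y : ℝ → ℝ, ContDiff ℝ 2 Y ∧
      (∀ y, deriv (deriv Y) y + b y * deriv Y y = V y * Y y) ∧
      Tendsto Y atTop (nhds 1) ∧
      Tendsto (deriv Y) atTop (nhds 0) ∧
      (∀ y, Y y = 1 - ∫ w in Ioi y, (V w * Y w - b w * deriv Y w) * (y - w)) ∧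
      (∀ y, deriv Y y = -∫ w in Ioi y, (V w * Y w - b w * deriv Y w)) := by
  have hcw : ContractingWith (1/2 : NNReal) H.Phi := by
    constructor
    · rw [← NNReal.coe_lt_coe]
      norm_num
    · apply LipschitzWith.of_dist_le_mul
      intro W W'
      have hc : ((1/2 : NNReal) : ℝ) = 1/2 := by push_cast; norm_num
      rw [hc]
      exact H.Phi_lip W W'
  haveI : Nonempty (ℝ →ᵇ (ℝ × ℝ)) := ⟨0⟩
  set W₀ : ℝ →ᵇ (ℝ × ℝ) := ContractingWith.fixedPoint H.Phi hcw with hW₀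
  have hfix : H.Phi W₀ = W₀ := hcw.fixedPoint_isFixedPt
  have hev : ∀ y, W₀ y = phiMap V b W₀ y := fun y => by
    conv_lhs => rw [← hfix]
    exact H.Phi_apply W₀ y
  set Yf : ℝ → ℝ := fun y => Real.exp (2 * eta V b y) * (W₀ y).1 with hYfdef
  set Zf : ℝ → ℝ := fun y => Real.exp (2 * eta V b y) * (W₀ y).2 with hZfdef
  have hcancel : ∀ y, Real.exp (2 * eta V b y) * Real.exp (-(2 * eta V b y)) = 1 := fun y => by
    rw [← Real.exp_add, add_neg_cancel, Real.exp_zero]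
  have hfwYZ : ∀ w, fw V b W₀ w = V w * Yf w - b w * Zf w := fun w => rfl
  have hY1 : ∀ y, Yf y = 1 + ∫ w in Ioi y, (w - y) * fw V b W₀ w := by
    intro y
    rw [hYfdef]
    show Real.exp (2 * eta V b y) * (W₀ y).1 = _
    rw [hev y]
    show Real.exp (2 * eta V b y) * (Real.exp (-(2 * eta V b y)) * _) = _
    rw [← mul_assoc, hcancel y, one_mul, H.S_eq W₀ y]
  have hY1' : ∀ y, Yf y
      = 1 + ((∫ w in Ioi y, w * fw V b W₀ w) - y * ∫ w in Ioi y, fw V b W₀ w) := by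
    intro y
    rw [hY1 y, H.S_eq W₀ y]
  have hZ1 : ∀ y, Zf y = -∫ w in Ioi y, fw V b W₀ w := by
    intro y
    rw [hZfdef]
    show Real.exp (2 * eta V b y) * (W₀ y).2 = _
    rw [hev y]
    show Real.exp (2 * eta V b y) * (Real.exp (-(2 * eta V b y)) * _) = _
    rw [← mul_assoc, hcancel y, one_mul]
  have hI1d : ∀ y, HasDerivAt (fun t => ∫ w in Ioi t, w * fw V b W₀ w)
      (-(y * fw V b W₀ y)) y := fun y =>
    hasDerivAt_int_Ioi
      (show Continuous (fun w => w * fw V b W₀ w) from continuous_id.mul (H.fw_cont W₀))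
      (show y - 1 < y by linarith) (H.fw_intOn W₀ (y - 1)).2
  have hI2d : ∀ y, HasDerivAt (fun t => ∫ w in Ioi t, fw V b W₀ w)
      (-(fw V b W₀ y)) y := fun y =>
    hasDerivAt_int_Ioi (H.fw_cont W₀) (show y - 1 < y by linarith) (H.fw_intOn W₀ (y - 1)).1
  have hZd : ∀ y, HasDerivAt Zf (fw V b W₀ y) y := by
    have hZfun : Zf = fun t => -∫ w in Ioi t, fw V b W₀ w := funext hZ1
    rw [hZfun]
    intro y
    exact (hI2d y).neg.congr_deriv (neg_neg _)
  have hYd : ∀ y, HasDerivAt Yf (Zf y) y := by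
    have hYfun : Yf = fun t =>
        1 + ((∫ w in Ioi t, w * fw V b W₀ w) - t * ∫ w in Ioi t, fw V b W₀ w) := funext hY1'
    rw [hYfun]
    intro y
    have hd := ((hI1d y).sub ((hasDerivAt_id y).mul (hI2d y))).const_add 1
    refine hd.congr_deriv ?_
    rw [hZ1 y]
    simp only [id_eq]
    ring
  have hdY : deriv Yf = Zf := funext fun y => (hYd y).deriv
  have hdZ : deriv Zf = fw V b W₀ := funext fun y => (hZd y).deriv
  -- tail bound for the limits
  have htail : Tendsto (fun y => ‖W₀‖ * ((Real.exp (2 * eta V b y) - 1) / 2)) atTop (𝓝 0) := by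
    have h1 : Tendsto (fun y => Real.exp (2 * eta V b y)) atTop (𝓝 (Real.exp (2 * 0))) :=
      (Real.continuous_exp.tendsto _).comp (H.eta_tendsto.const_mul 2)
    rw [mul_zero, Real.exp_zero] at h1
    have h2 := (((h1.sub_const 1).div_const 2).const_mul ‖W₀‖)
    simpa using h2
  refine ⟨Yf, ?_, ?_, ?_, ?_, ?_, ?_⟩
  · -- C²
    have h1 : ContDiff ℝ 1 Zf := contDiff_one_iff_deriv.2
      ⟨fun y => (hZd y).differentiableAt, by rw [hdZ]; exact H.fw_cont W₀⟩
    rw [show (2 : WithTop ℕ∞) = 1 + 1 by norm_num]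
    exact contDiff_succ_iff_deriv.2
      ⟨fun y => (hYd y).differentiableAt, by simp, by rw [hdY]; exact h1⟩
  · intro y
    rw [hdY, hdZ, hfwYZ y]
    ring
  · -- Y → 1
    have hb : ∀ y, ‖Yf y - 1‖ ≤ ‖W₀‖ * ((Real.exp (2 * eta V b y) - 1) / 2) := by
      intro y
      rw [Real.norm_eq_abs, hY1 y, add_sub_cancel_left]
      exact (H.fw_key W₀ y).1
    have h0 := squeeze_zero_norm hb htail
    have := h0.add_const 1
    simpa using this
  · -- Y' → 0
    rw [hdY]
    have hb : ∀ y, ‖Zf y‖ ≤ ‖W₀‖ * ((Real.exp (2 * eta V b y) - 1) / 2) := by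
      intro y
      rw [Real.norm_eq_abs, hZ1 y, abs_neg]
      exact (H.fw_key W₀ y).2
    exact squeeze_zero_norm hb htail
  · intro y
    rw [hdY]
    have hpt : ∀ w, (V w * Yf w - b w * Zf w) * (y - w) = -((w - y) * fw V b W₀ w) :=
      fun w => by rw [← hfwYZ w]; ring
    simp_rw [hpt]
    rw [integral_neg, hY1 y]
    ring
  · intro y
    rw [hdY]
    have hpt : ∀ w, V w * Yf w - b w * Zf w = fw V b W₀ w := fun w => (hfwYZ w).symm
    simp_rw [hpt]
    exact hZ1 y

end Jost

/-- threshold Jost solution: if `(1+y²)^{1/2} V` and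
`(1+y²)^{1/2} b` are integrable, there is a C² solution of `Y'' + b Y' = V Y`
with `Y → 1`, `Y' → 0` at `+∞`, satisfying the stated integral equations. -/
theorem stmt13 (V b : ℝ → ℝ) (hV : Continuous V) (hb : Continuous b)
    (hVint : Integrable (fun y => Real.sqrt (1 + y ^ 2) * V y))
    (hbint : Integrable (fun y => Real.sqrt (1 + y ^ 2) * b y)) :
    ∃ Y : ℝ → ℝ, ContDiff ℝ 2 Y ∧
      (∀ y, deriv (deriv Y) y + b y * deriv Y y = V y * Y y) ∧
      Tendsto Y atTop (nhds 1) ∧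
      Tendsto (deriv Y) atTop (nhds 0) ∧
      (∀ y, Y y = 1 - ∫ w in Ioi y, (V w * Y w - b w * deriv Y w) * (y - w)) ∧
      (∀ y, deriv Y y = -∫ w in Ioi y, (V w * Y w - b w * deriv Y w)) :=
  (Jost.Hyp.mk hV hb hVint hbint).exists_sol
end
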